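/- Let K : ℝ → ℝ be a kernel function: nonnegative, bounded, measurable, symmetric (K(−u) = K(u) for all u), supported in [−1,1], with ∫_ℝ K(u) du = 1, and write κ_q = ∫_{u>0} u^q K(u) du. Let c ∈ ℝ, δ > 0, M ≥ 0, and let f : ℝ → ℝ be three times differentiable on [c, c+δ] (one-sided derivatives at c) with |f'''(x)| ≤ M for all x ∈ [c, c+δ]. Then for every h with 0 < h < δ: |(1/h) ∫_{(c,∞)} K((x−c)/h) f(x) dx − ( (1/2) f(c) + κ_1 h f'(c) + (κ_2/2) h² f''(c) )| ≤ (κ_3 M / 6) h³. -/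

import Mathlib

open MeasureTheory

section Aux
open Set

private lemma taylor3aux {a b M : ℝ} {f f' f'' f''' : ℝ → ℝ}
    (h1 : ∀ x ∈ Set.Icc a b, HasDerivWithinAt f (f' x) (Set.Icc a b) x)
    (h2 : ∀ x ∈ Set.Icc a b, HasDerivWithinAt f' (f'' x) (Set.Icc a b) x)
    (h3 : ∀ x ∈ Set.Icc a b, HasDerivWithinAt f'' (f''' x) (Set.Icc a b) x)
    (hbd : ∀ x ∈ Set.Icc a b, |f''' x| ≤ M) :
    ∀ x ∈ Set.Icc a b,
      |f x - f a - f' a * (x - a) - f'' a / 2 * (x - a) ^ 2| ≤ M * (x - a) ^ 3 / 6 := by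
  have hIci : ∀ {g g' : ℝ → ℝ}, (∀ x ∈ Set.Icc a b, HasDerivWithinAt g (g' x) (Set.Icc a b) x) →
      ∀ x ∈ Set.Ico a b, HasDerivWithinAt g (g' x) (Set.Ici x) x := by
    intro g g' hg x hx
    exact ((hg x (Ico_subset_Icc_self hx)).mono_of_mem_nhdsWithin
      (Icc_mem_nhdsGE_of_mem hx)).mono_of_mem_nhdsWithin self_mem_nhdsWithin
  have step1 : ∀ x ∈ Set.Icc a b, |f'' x - f'' a| ≤ M * (x - a) := by
    have hcont : ContinuousOn (fun x => f'' x - f'' a) (Set.Icc a b) :=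
      fun x hx => ((h3 x hx).continuousWithinAt).sub continuousWithinAt_const
    have hder : ∀ x ∈ Set.Ico a b,
        HasDerivWithinAt (fun x => f'' x - f'' a) (f''' x) (Set.Ici x) x := by
      intro x hx
      simpa using (hIci h3 x hx).sub_const (f'' a)
    have := image_norm_le_of_norm_deriv_right_le_deriv_boundary hcont hder
      (B := fun x => M * (x - a)) (B' := fun _ => M)
      (by simp) (fun x => ((hasDerivAt_id x).sub_const a).const_mul M
        |>.congr_deriv (by ring_nf; try simp [id_eq]; try ring))
      (fun x hx => hbd x (Ico_subset_Icc_self hx))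
    intro x hx
    simpa [Real.norm_eq_abs] using this hx
  have step2 : ∀ x ∈ Set.Icc a b,
      |f' x - f' a - f'' a * (x - a)| ≤ M * (x - a) ^ 2 / 2 := by
    have hcontf' : ContinuousOn f' (Set.Icc a b) := fun x hx => (h2 x hx).continuousWithinAt
    have hcont : ContinuousOn (fun x => f' x - f' a - f'' a * (x - a)) (Set.Icc a b) := by
      fun_prop
    have hder : ∀ x ∈ Set.Ico a b,
        HasDerivWithinAt (fun x => f' x - f' a - f'' a * (x - a)) (f'' x - f'' a)
          (Set.Ici x) x := by
      intro x hx
      have := ((hIci h2 x hx).sub_const (f' a)).sub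
        ((((hasDerivAt_id x).sub_const a).const_mul (f'' a)).hasDerivWithinAt)
      exact this.congr_deriv (by ring_nf; try simp [id_eq]; try ring)
    have := image_norm_le_of_norm_deriv_right_le_deriv_boundary hcont hder
      (B := fun x => M * (x - a) ^ 2 / 2) (B' := fun x => M * (x - a))
      (by simp)
      (fun x => by
        have : HasDerivAt (fun x => M * (x - a) ^ 2 / 2)
            (M * (2 * (x - a) ^ 1 * 1) / 2) x :=
          (((hasDerivAt_id x).sub_const a).pow 2).const_mul M |>.div_const 2
        exact this.congr_deriv (by ring_nf; try simp [id_eq]; try ring))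
      (fun x hx => by
        simpa [Real.norm_eq_abs] using step1 x (Ico_subset_Icc_self hx))
    intro x hx
    simpa [Real.norm_eq_abs] using this hx
  have hcontf : ContinuousOn f (Set.Icc a b) := fun x hx => (h1 x hx).continuousWithinAt
  have hcont : ContinuousOn
      (fun x => f x - f a - f' a * (x - a) - f'' a / 2 * (x - a) ^ 2) (Set.Icc a b) := by
    fun_prop
  have hder : ∀ x ∈ Set.Ico a b,
      HasDerivWithinAt (fun x => f x - f a - f' a * (x - a) - f'' a / 2 * (x - a) ^ 2)
        (f' x - f' a - f'' a * (x - a)) (Set.Ici x) x := by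
    intro x hx
    have := (((hIci h1 x hx).sub_const (f a)).sub
        ((((hasDerivAt_id x).sub_const a).const_mul (f' a)).hasDerivWithinAt)).sub
        (((((hasDerivAt_id x).sub_const a).pow 2).const_mul (f'' a / 2)).hasDerivWithinAt)
    exact this.congr_deriv (by ring_nf; try simp [id_eq]; try ring)
  have := image_norm_le_of_norm_deriv_right_le_deriv_boundary hcont hder
    (B := fun x => M * (x - a) ^ 3 / 6) (B' := fun x => M * (x - a) ^ 2 / 2)
    (by simp)
    (fun x => by
      have : HasDerivAt (fun x => M * (x - a) ^ 3 / 6)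
          (M * (3 * (x - a) ^ 2 * 1) / 6) x :=
        (((hasDerivAt_id x).sub_const a).pow 3).const_mul M |>.div_const 6
      exact this.congr_deriv (by ring_nf; try simp [id_eq]; try ring))
    (fun x hx => by
      simpa [Real.norm_eq_abs] using step2 x (Ico_subset_Icc_self hx))
  intro x hx
  simpa [Real.norm_eq_abs] using this hx

private lemma intOnIoiAux {F : ℝ → ℝ}
    (hmeas : AEStronglyMeasurable F (volume.restrict (Ioc (0:ℝ) 1)))
    (hbd : ∃ C, ∀ u ∈ Ioc (0:ℝ) 1, ‖F u‖ ≤ C)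
    (hzero : ∀ u : ℝ, 1 < u → F u = 0) : IntegrableOn F (Ioi (0:ℝ)) := by
  rw [← Ioc_union_Ioi_eq_Ioi (zero_le_one (α := ℝ)), integrableOn_union]
  constructor
  · obtain ⟨C, hC⟩ := hbd
    refine Integrable.mono' (integrable_const C) hmeas ?_
    exact (ae_restrict_iff' measurableSet_Ioc).2 (ae_of_all _ hC)
  · have : EqOn (fun _ => (0:ℝ)) F (Ioi (1:ℝ)) := fun u hu => (hzero u hu).symm
    exact (integrableOn_congr_fun this measurableSet_Ioi).1 (integrableOn_zero)

private lemma shiftIoiAux (g : ℝ → ℝ) (c : ℝ) :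
    (∫ x in Ioi c, g x) = ∫ y in Ioi (0:ℝ), g (c + y) := by
  have A : MeasurableEmbedding (fun y : ℝ => c + y) :=
    (Homeomorph.addLeft c).isClosedEmbedding.measurableEmbedding
  have h := A.setIntegral_map (μ := volume) g (Ioi c)
  rw [map_add_left_eq_self volume c] at h
  rw [h]
  congr 1
  ext x
  simp

end Aux

/-- One-sided kernel Taylor expansion at a boundary point, with half-moments κ_q of the
kernel and error controlled by the third derivative bound (Lemma A.2 core). -/
theorem stmt11 (K : ℝ → ℝ)
    (hKnn : ∀ u, 0 ≤ K u) (hKbdd : ∃ B, ∀ u, K u ≤ B) (hKmeas : Measurable K)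
    (hKsymm : ∀ u, K (-u) = K u) (hKsupp : ∀ u, u ∉ Set.Icc (-1 : ℝ) 1 → K u = 0)
    (hKone : (∫ u, K u) = 1)
    (c δ M : ℝ) (hδ : 0 < δ) (hM : 0 ≤ M)
    (f f' f'' f''' : ℝ → ℝ)
    (hd1 : ∀ x ∈ Set.Icc c (c + δ), HasDerivWithinAt f (f' x) (Set.Icc c (c + δ)) x)
    (hd2 : ∀ x ∈ Set.Icc c (c + δ), HasDerivWithinAt f' (f'' x) (Set.Icc c (c + δ)) x)
    (hd3 : ∀ x ∈ Set.Icc c (c + δ), HasDerivWithinAt f'' (f''' x) (Set.Icc c (c + δ)) x)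
    (hbd : ∀ x ∈ Set.Icc c (c + δ), |f''' x| ≤ M) :
    ∀ h : ℝ, 0 < h → h < δ →
      |(1 / h) * (∫ x in Set.Ioi c, K ((x - c) / h) * f x)
          - ((1 / 2) * f c + (∫ u in Set.Ioi (0 : ℝ), u * K u) * h * f' c
              + ((∫ u in Set.Ioi (0 : ℝ), u ^ 2 * K u) / 2) * h ^ 2 * f'' c)|
        ≤ (∫ u in Set.Ioi (0 : ℝ), u ^ 3 * K u) * M / 6 * h ^ 3 := by
  intro h hh hhδ
  obtain ⟨B, hB⟩ := hKbdd
  have hB0 : 0 ≤ B := le_trans (hKnn 0) (hB 0)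
  have hKzero : ∀ u : ℝ, 1 < u → K u = 0 := by
    intro u hu
    exact hKsupp u (fun hmem => absurd hmem.2 (not_le.2 hu))
  have hKnorm : ∀ u : ℝ, ‖K u‖ ≤ B := by
    intro u; rw [Real.norm_eq_abs, abs_of_nonneg (hKnn u)]; exact hB u
  -- integrability of moment integrands
  have hIntKq : ∀ q : ℕ, IntegrableOn (fun u => u ^ q * K u) (Set.Ioi (0:ℝ)) := by
    intro q
    refine intOnIoiAux
      (((measurable_id.pow_const q).mul hKmeas).aestronglyMeasurable.restrict) ⟨B, ?_⟩ ?_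
    · intro u hu
      rw [Real.norm_eq_abs, abs_mul, abs_of_nonneg (hKnn u),
        abs_of_nonneg (pow_nonneg hu.1.le q)]
      calc u ^ q * K u ≤ 1 * B :=
            mul_le_mul (pow_le_one₀ hu.1.le hu.2) (hB u) (hKnn u) zero_le_one
        _ = B := one_mul B
    · intro u hu; simp [hKzero u hu]
  have hIntK : IntegrableOn K (Set.Ioi (0:ℝ)) := by
    refine intOnIoiAux (hKmeas.aestronglyMeasurable.restrict) ⟨B, fun u _ => hKnorm u⟩ hKzero
  -- global integrability of K
  have hKeq : K = (Set.Icc (-1:ℝ) 1).indicator K := by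
    funext u
    by_cases hu : u ∈ Set.Icc (-1:ℝ) 1
    · simp [hu]
    · simp [hu, hKsupp u hu]
  have hKint : Integrable K := by
    rw [hKeq, integrable_indicator_iff measurableSet_Icc]
    refine Integrable.mono' (integrableOn_const measure_Icc_lt_top.ne)
      hKmeas.aestronglyMeasurable.restrict (ae_of_all _ fun u => hKnorm u)
  -- half integral
  have hhalf : (∫ u in Set.Ioi (0:ℝ), K u) = 1 / 2 := by
    have hneg : (∫ u in Set.Iic (0:ℝ), K u) = ∫ u in Set.Ioi (0:ℝ), K u := by
      have h0 := integral_comp_neg_Iic (0:ℝ) K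
      simp only [neg_zero, hKsymm] at h0
      exact h0
    have hsplit : (∫ u, K u) = (∫ u in Set.Iic (0:ℝ), K u) + ∫ u in Set.Ioi (0:ℝ), K u := by
      rw [← setIntegral_union (Set.Iic_disjoint_Ioi le_rfl) measurableSet_Ioi
        hKint.integrableOn hKint.integrableOn, Set.Iic_union_Ioi, setIntegral_univ]
    rw [hKone, hneg] at hsplit
    linarith
  -- change of variables
  have hchg : (∫ x in Set.Ioi c, K ((x - c) / h) * f x)
      = h * ∫ u in Set.Ioi (0:ℝ), K u * f (c + h * u) := by
    rw [shiftIoiAux (fun x => K ((x - c) / h) * f x) c]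
    have h1 : (∫ y in Set.Ioi (0:ℝ), K ((c + y - c) / h) * f (c + y))
        = ∫ y in Set.Ioi (0:ℝ), K (y / h) * f (c + y) := by
      refine setIntegral_congr_fun measurableSet_Ioi fun y _ => ?_
      simp
    rw [h1]
    have h2 := integral_comp_mul_left_Ioi (fun y => K (y / h) * f (c + y)) 0 hh
    simp only [mul_zero, smul_eq_mul] at h2
    have h3 : (∫ u in Set.Ioi (0:ℝ), K (h * u / h) * f (c + h * u))
        = ∫ u in Set.Ioi (0:ℝ), K u * f (c + h * u) := by
      refine setIntegral_congr_fun measurableSet_Ioi fun u _ => ?_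
      rw [mul_div_cancel_left₀ _ hh.ne']
    rw [h3] at h2
    rw [h2, ← mul_assoc, mul_inv_cancel₀ hh.ne', one_mul]
  -- continuity of the rescaled f
  have hfc : ContinuousOn f (Set.Icc c (c + δ)) := fun x hx => (hd1 x hx).continuousWithinAt
  have hmaps : ∀ u ∈ Set.Icc (0:ℝ) 1, c + h * u ∈ Set.Icc c (c + δ) := by
    intro u hu
    constructor
    · nlinarith [hu.1, hh.le]
    · nlinarith [hu.2, hu.1, hh.le, hhδ]
  have haff : ContinuousOn (fun u : ℝ => f (c + h * u)) (Set.Icc (0:ℝ) 1) := by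
    refine hfc.comp (by fun_prop) hmaps
  obtain ⟨C, hC⟩ := isCompact_Icc.exists_bound_of_continuousOn haff
  -- integrability of K u * f (c + h u)
  have hintA : IntegrableOn (fun u => K u * f (c + h * u)) (Set.Ioi (0:ℝ)) := by
    refine intOnIoiAux ?_ ⟨B * C, ?_⟩ ?_
    · exact hKmeas.aestronglyMeasurable.restrict.mul
        (((haff.mono Set.Ioc_subset_Icc_self).aestronglyMeasurable measurableSet_Ioc))
    · intro u hu
      rw [norm_mul]
      exact mul_le_mul (hKnorm u) (hC u (Set.Ioc_subset_Icc_self hu)) (norm_nonneg _) hB0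
    · intro u hu; simp [hKzero u hu]
  -- the Taylor polynomial part
  set P : ℝ → ℝ := fun u => f c + f' c * (h * u) + f'' c / 2 * (h * u) ^ 2 with hP
  have hPeq : (fun u => K u * P u)
      = fun u => f c * K u + (f' c * h) * (u * K u)
          + (f'' c * h ^ 2 / 2) * (u ^ 2 * K u) := by
    funext u; simp only [hP]; ring
  have hintP1 : IntegrableOn (fun u : ℝ => u * K u) (Set.Ioi (0:ℝ)) := by
    have := hIntKq 1
    simpa using this
  have hintP : IntegrableOn (fun u => K u * P u) (Set.Ioi (0:ℝ)) := by
    rw [hPeq]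
    exact ((hIntK.const_mul (f c)).add (hintP1.const_mul (f' c * h))).add
      ((hIntKq 2).const_mul (f'' c * h ^ 2 / 2))
  have hPint : (∫ u in Set.Ioi (0:ℝ), K u * P u)
      = f c * (1 / 2) + (f' c * h) * (∫ u in Set.Ioi (0:ℝ), u * K u)
        + (f'' c * h ^ 2 / 2) * (∫ u in Set.Ioi (0:ℝ), u ^ 2 * K u) := by
    rw [hPeq]
    have eA : (∫ u in Set.Ioi (0:ℝ),
          (f c * K u + f' c * h * (u * K u) + f'' c * h ^ 2 / 2 * (u ^ 2 * K u)))
        = (∫ u in Set.Ioi (0:ℝ), (f c * K u + f' c * h * (u * K u)))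
          + ∫ u in Set.Ioi (0:ℝ), f'' c * h ^ 2 / 2 * (u ^ 2 * K u) :=
      integral_add ((hIntK.const_mul (f c)).add (hintP1.const_mul (f' c * h)))
        ((hIntKq 2).const_mul (f'' c * h ^ 2 / 2))
    have eB : (∫ u in Set.Ioi (0:ℝ), (f c * K u + f' c * h * (u * K u)))
        = (∫ u in Set.Ioi (0:ℝ), f c * K u)
          + ∫ u in Set.Ioi (0:ℝ), f' c * h * (u * K u) :=
      integral_add (hIntK.const_mul (f c)) (hintP1.const_mul (f' c * h))
    rw [eA, eB, integral_const_mul, integral_const_mul, integral_const_mul, hhalf]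
  -- the error term
  have hintE : IntegrableOn (fun u => K u * (f (c + h * u) - P u)) (Set.Ioi (0:ℝ)) := by
    have : (fun u => K u * (f (c + h * u) - P u))
        = fun u => K u * f (c + h * u) - K u * P u := by
      funext u; ring
    rw [this]; exact hintA.sub hintP
  have hsplitE : (∫ u in Set.Ioi (0:ℝ), K u * f (c + h * u))
      = (∫ u in Set.Ioi (0:ℝ), K u * P u)
        + ∫ u in Set.Ioi (0:ℝ), K u * (f (c + h * u) - P u) := by
    rw [← integral_add hintP hintE]
    refine setIntegral_congr_fun measurableSet_Ioi fun u _ => ?_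
    ring
  -- dominating function
  have hdom : IntegrableOn (fun u => (M * h ^ 3 / 6) * (u ^ 3 * K u)) (Set.Ioi (0:ℝ)) :=
    (hIntKq 3).const_mul _
  have hEbound : |∫ u in Set.Ioi (0:ℝ), K u * (f (c + h * u) - P u)|
      ≤ (M * h ^ 3 / 6) * ∫ u in Set.Ioi (0:ℝ), u ^ 3 * K u := by
    have hT := taylor3aux hd1 hd2 hd3 hbd
    have hnorm : |∫ u in Set.Ioi (0:ℝ), K u * (f (c + h * u) - P u)|
        ≤ ∫ u in Set.Ioi (0:ℝ), |K u * (f (c + h * u) - P u)| := by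
      have := norm_integral_le_integral_norm (μ := volume.restrict (Set.Ioi (0:ℝ)))
          (fun u => K u * (f (c + h * u) - P u))
      simp only [Real.norm_eq_abs] at this
      exact this
    refine hnorm.trans ?_
    rw [← integral_const_mul]
    refine setIntegral_mono_on hintE.abs hdom measurableSet_Ioi fun u hu => ?_
    by_cases hu1 : u ≤ 1
    · have hx : c + h * u ∈ Set.Icc c (c + δ) := hmaps u ⟨le_of_lt hu, hu1⟩
      have := hT (c + h * u) hx
      have hxa : c + h * u - c = h * u := by ring
      rw [hxa] at this
      have hEq : f (c + h * u) - P u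
          = f (c + h * u) - f c - f' c * (h * u) - f'' c / 2 * (h * u) ^ 2 := by
        simp only [hP]; ring
      rw [abs_mul, abs_of_nonneg (hKnn u), hEq]
      calc K u * |f (c + h * u) - f c - f' c * (h * u) - f'' c / 2 * (h * u) ^ 2|
          ≤ K u * (M * (h * u) ^ 3 / 6) :=
            mul_le_mul_of_nonneg_left this (hKnn u)
        _ = M * h ^ 3 / 6 * (u ^ 3 * K u) := by ring
    · rw [hKzero u (not_le.1 hu1)]
      simp
  -- put it together
  have hmain : (1 / h) * (∫ x in Set.Ioi c, K ((x - c) / h) * f x)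
      = (f c * (1 / 2) + (f' c * h) * (∫ u in Set.Ioi (0:ℝ), u * K u)
          + (f'' c * h ^ 2 / 2) * (∫ u in Set.Ioi (0:ℝ), u ^ 2 * K u))
        + ∫ u in Set.Ioi (0:ℝ), K u * (f (c + h * u) - P u) := by
    rw [hchg, ← mul_assoc, one_div, inv_mul_cancel₀ hh.ne', one_mul, hsplitE, hPint]
  rw [hmain]
  have hfinal : ∀ R κ1 κ2 : ℝ,
      (f c * (1 / 2) + (f' c * h) * κ1 + (f'' c * h ^ 2 / 2) * κ2) + R
        - ((1 / 2) * f c + κ1 * h * f' c + κ2 / 2 * h ^ 2 * f'' c) = R := by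
    intro R κ1 κ2; ring
  rw [hfinal]
  calc |∫ u in Set.Ioi (0:ℝ), K u * (f (c + h * u) - P u)|
      ≤ (M * h ^ 3 / 6) * ∫ u in Set.Ioi (0:ℝ), u ^ 3 * K u := hEbound
    _ = (∫ u in Set.Ioi (0:ℝ), u ^ 3 * K u) * M / 6 * h ^ 3 := by ring
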